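/- arXiv:0809.4450 — 4 statements merged into one kernel-verified Lean document; each statement's English description precedes it below -/
import Mathlib

section
/- If a C¹ curve (x₁(t),...,x₄(t)) satisfies x₁(t) = √(x₂(t)² + x₃(t)² + x₄(t)²) > 0 and ẋ₁ > 0 and -ẋ₁² + ẋ₂² + ẋ₃² + ẋ₄² ≤ 0 on an interval, then -ẋ₁² + ẋ₂² + ẋ₃² + ẋ₄² = 0 on that interval, i.e., the curve is null. -/
theorem curve_on_cone_boundary_is_null
    (a b : ℝ) (x₁ x₂ x₃ x₄ x₁' x₂' x₃' x₄' : ℝ → ℝ)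
    (hd₁ : ∀ t ∈ Set.Ioo a b, HasDerivAt x₁ (x₁' t) t)
    (hd₂ : ∀ t ∈ Set.Ioo a b, HasDerivAt x₂ (x₂' t) t)
    (hd₃ : ∀ t ∈ Set.Ioo a b, HasDerivAt x₃ (x₃' t) t)
    (hd₄ : ∀ t ∈ Set.Ioo a b, HasDerivAt x₄ (x₄' t) t)
    (hcone : ∀ t ∈ Set.Ioo a b,
      x₁ t = Real.sqrt ((x₂ t)^2 + (x₃ t)^2 + (x₄ t)^2) ∧ 0 < x₁ t)
    (hfd : ∀ t ∈ Set.Ioo a b, 0 < x₁' t)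
    (hnspc : ∀ t ∈ Set.Ioo a b,
      -(x₁' t)^2 + (x₂' t)^2 + (x₃' t)^2 + (x₄' t)^2 ≤ 0) :
    ∀ t ∈ Set.Ioo a b,
      -(x₁' t)^2 + (x₂' t)^2 + (x₃' t)^2 + (x₄' t)^2 = 0 := by
  intro t ht
  -- squared cone equation everywhere on Ioo
  have hsq : ∀ s ∈ Set.Ioo a b,
      (x₁ s)^2 - (x₂ s)^2 - (x₃ s)^2 - (x₄ s)^2 = 0 := by
    intro s hs
    obtain ⟨he, _⟩ := hcone s hs
    have hnn : (0:ℝ) ≤ (x₂ s)^2 + (x₃ s)^2 + (x₄ s)^2 := by positivity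
    have : (x₁ s)^2 = (x₂ s)^2 + (x₃ s)^2 + (x₄ s)^2 := by
      rw [he, Real.sq_sqrt hnn]
    linarith
  -- derivative of the squared relation
  have hg : HasDerivAt (fun s => (x₁ s)^2 - (x₂ s)^2 - (x₃ s)^2 - (x₄ s)^2)
      (2 * x₁ t * x₁' t - 2 * x₂ t * x₂' t - 2 * x₃ t * x₃' t - 2 * x₄ t * x₄' t) t := by
    have h1 := ((hd₁ t ht).pow 2)
    have h2 := ((hd₂ t ht).pow 2)
    have h3 := ((hd₃ t ht).pow 2)
    have h4 := ((hd₄ t ht).pow 2)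
    have := ((h1.sub h2).sub h3).sub h4
    convert this using 1
    all_goals first | rfl | (push_cast; ring)
  have hg0 : HasDerivAt (fun s => (x₁ s)^2 - (x₂ s)^2 - (x₃ s)^2 - (x₄ s)^2) 0 t := by
    have heq : (fun s => (x₁ s)^2 - (x₂ s)^2 - (x₃ s)^2 - (x₄ s)^2) =ᶠ[nhds t]
        (fun _ => (0:ℝ)) := by
      filter_upwards [isOpen_Ioo.mem_nhds ht] with s hs using hsq s hs
    exact (hasDerivAt_const t (0:ℝ)).congr_of_eventuallyEq heq
  have hD : 2 * x₁ t * x₁' t - 2 * x₂ t * x₂' t - 2 * x₃ t * x₃' t - 2 * x₄ t * x₄' t = 0 :=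
    hg.unique hg0
  have h1 := hsq t ht
  have hpos := (hcone t ht).2
  have hf := hfd t ht
  have hle := hnspc t ht
  -- Lagrange identity / Cauchy-Schwarz
  have hP : x₁ t * x₁' t = x₂ t * x₂' t + x₃ t * x₃' t + x₄ t * x₄' t := by linarith
  have hPsq : (x₁ t * x₁' t)^2 = (x₂ t * x₂' t + x₃ t * x₃' t + x₄ t * x₄' t)^2 := by
    rw [hP]
  have hA : (x₂ t)^2 + (x₃ t)^2 + (x₄ t)^2 = (x₁ t)^2 := by linarith
  have hCS : (x₁ t)^2 * (x₁' t)^2 ≤ (x₁ t)^2 * ((x₂' t)^2 + (x₃' t)^2 + (x₄' t)^2) := by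
    nlinarith [hPsq, hA, sq_nonneg (x₂ t * x₃' t - x₃ t * x₂' t),
      sq_nonneg (x₂ t * x₄' t - x₄ t * x₂' t),
      sq_nonneg (x₃ t * x₄' t - x₄ t * x₃' t)]
  have hS : (x₁' t)^2 ≤ (x₂' t)^2 + (x₃' t)^2 + (x₄' t)^2 :=
    le_of_mul_le_mul_left hCS (by positivity)
  linarith
end

section
/- Let γ(t) = (x(t), y(t), z(t)) be a geodesic through the origin of the Lorentzian Heisenberg group, i.e., -x(t)²+y(t)² = (4‖v₀‖²/θ²) sinh²(|θ|t/2) and z(t) = (‖v₀‖²/(2θ²))(|θ|t - sinh(|θ|t)) with θ ≠ 0 and ‖v₀‖² = -ẋ₀²+ẏ₀². Then for all t ≠ 0: -x(t)² + y(t)² + 4|z(t)| < 0 if ‖v₀‖² < 0, = 0 if ‖v₀‖² = 0, and > 0 if ‖v₀‖² > 0. -/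
theorem causal_character_of_geodesics (θ dx₀ dy₀ : ℝ) (hθ : θ ≠ 0)
    (x y z : ℝ → ℝ)
    (hxy : ∀ t, -(x t)^2 + (y t)^2
      = (4 * (-dx₀^2 + dy₀^2) / θ^2) * (Real.sinh (|θ| * t / 2))^2)
    (hz : ∀ t, z t = ((-dx₀^2 + dy₀^2) / (2 * θ^2)) * (|θ| * t - Real.sinh (|θ| * t))) :
    ∀ t : ℝ, t ≠ 0 →
      ((-dx₀^2 + dy₀^2 < 0 → -(x t)^2 + (y t)^2 + 4 * |z t| < 0) ∧
       (-dx₀^2 + dy₀^2 = 0 → -(x t)^2 + (y t)^2 + 4 * |z t| = 0) ∧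
       (0 < -dx₀^2 + dy₀^2 → 0 < -(x t)^2 + (y t)^2 + 4 * |z t|)) := by
  intro t ht
  have hθ2 : (0:ℝ) < θ^2 := by positivity
  set N := -dx₀^2 + dy₀^2 with hN
  set u := |θ| * |t| with hudef
  have hu : 0 < u := by
    rw [hudef]
    exact mul_pos (abs_pos.2 hθ) (abs_pos.2 ht)
  -- squares of sinh at ±
  have hsq : (Real.sinh (|θ| * t / 2))^2 = (Real.sinh (u/2))^2 := by
    rcases abs_cases t with ⟨h1, _⟩ | ⟨h1, _⟩
    · rw [hudef, h1]
    · rw [hudef, h1, show |θ| * -t / 2 = -(|θ| * t / 2) by ring, Real.sinh_neg]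
      ring
  have self_le : ∀ s : ℝ, 0 ≤ s → s ≤ Real.sinh s := by
    intro s hs
    rcases eq_or_lt_of_le hs with h | h
    · simp [← h]
    · exact le_of_lt (Real.self_lt_sinh_iff.2 h)
  have habs : |(|θ| * t) - Real.sinh (|θ| * t)| = Real.sinh u - u := by
    rcases abs_cases t with ⟨h1, hpos⟩ | ⟨h1, hneg⟩
    · have hx : 0 ≤ |θ| * t := mul_nonneg (abs_nonneg θ) hpos
      rw [hudef, h1, abs_of_nonpos (by linarith [self_le _ hx])]
      ring
    · have hx : 0 ≤ |θ| * (-t) := mul_nonneg (abs_nonneg θ) (by linarith)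
      have h2 : Real.sinh (|θ| * t) ≤ |θ| * t := by
        have := self_le _ hx
        rw [show |θ| * (-t) = -(|θ| * t) by ring, Real.sinh_neg] at this
        linarith
      rw [hudef, h1, abs_of_nonneg (by linarith),
        show |θ| * -t = -(|θ| * t) by ring, Real.sinh_neg]
      ring
  have hcosh : 2 * (Real.sinh (u/2))^2 = Real.cosh u - 1 := by
    have h1 := Real.cosh_two_mul (u/2)
    have h2 := Real.cosh_sq (u/2)
    rw [show 2 * (u/2) = u by ring] at h1
    linarith
  have hexp : Real.cosh u - Real.sinh u = Real.exp (-u) := Real.cosh_sub_sinh u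
  have hA : 0 < Real.sinh u - u := sub_pos.2 (Real.self_lt_sinh_iff.2 hu)
  have hB : 0 < Real.cosh u - 1 := sub_pos.2 (Real.one_lt_cosh.2 (ne_of_gt hu))
  have hC : 0 < Real.exp (-u) - 1 + u := by
    have := Real.add_one_lt_exp (show -u ≠ 0 by linarith)
    linarith
  have hzabs : |z t| = |N| / (2 * θ^2) * (Real.sinh u - u) := by
    rw [hz t, abs_mul, habs, abs_div, abs_of_pos (by positivity : (0:ℝ) < 2 * θ^2)]
  refine ⟨fun hneg => ?_, fun hzero => ?_, fun hpos => ?_⟩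
  · have key : -(x t)^2 + (y t)^2 + 4 * |z t|
        = 2 * N / θ^2 * (Real.exp (-u) - 1 + u) := by
      rw [hxy t, hsq, hzabs, abs_of_neg hneg]
      linear_combination (2*N/θ^2) * hcosh + (2*N/θ^2) * hexp
    rw [key]
    have : 2 * N / θ^2 < 0 := div_neg_of_neg_of_pos (by linarith) hθ2
    exact mul_neg_of_neg_of_pos this hC
  · rw [hxy t, hsq, hzabs, hzero]
    simp
  · have key : -(x t)^2 + (y t)^2 + 4 * |z t|
        = 2 * N / θ^2 * ((Real.cosh u - 1) + (Real.sinh u - u)) := by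
      rw [hxy t, hsq, hzabs, abs_of_pos hpos]
      linear_combination (2*N/θ^2) * hcosh
    rw [key]
    have : 0 < 2 * N / θ^2 := div_pos (by linarith) hθ2
    exact mul_pos this (by linarith)
end

section
/- The function μ(τ) = τ/sinh²(τ) - coth(τ), extended by μ(0) = 0, is strictly decreasing on ℝ, tends to 1 as τ → -∞ and to -1 as τ → +∞. Consequently, for every r ∈ (-1, 1) the equation μ(τ) = r has exactly one solution τ ∈ ℝ, and for |r| ≥ 1 there is no solution. -/
open Filter

/-- The function μ(τ) = τ/sinh²(τ) - coth(τ), extended by μ(0) = 0. -/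
noncomputable def muFn (τ : ℝ) : ℝ :=
  if τ = 0 then 0 else τ / (Real.sinh τ)^2 - Real.cosh τ / Real.sinh τ

lemma muFn_zero : muFn 0 = 0 := by simp [muFn]

lemma muFn_of_ne {τ : ℝ} (h : τ ≠ 0) :
    muFn τ = (τ - Real.sinh τ * Real.cosh τ) / (Real.sinh τ)^2 := by
  have hs : Real.sinh τ ≠ 0 := fun hc => h (Real.sinh_eq_zero.mp hc)
  simp only [muFn, if_neg h]
  field_simp

lemma muFn_neg (τ : ℝ) : muFn (-τ) = -muFn τ := by
  rcases eq_or_ne τ 0 with rfl | h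
  · simp [muFn]
  · have h' : -τ ≠ 0 := neg_ne_zero.mpr h
    rw [muFn_of_ne h, muFn_of_ne h']
    rw [Real.sinh_neg, Real.cosh_neg]
    ring

lemma sinh_lt_mul_cosh {x : ℝ} (hx : 0 < x) : Real.sinh x < x * Real.cosh x := by
  set q : ℝ → ℝ := fun y => y * Real.cosh y - Real.sinh y with hq
  have hd : ∀ y : ℝ, HasDerivAt q (y * Real.sinh y) y := by
    intro y
    have h1 : HasDerivAt (fun y : ℝ => y * Real.cosh y)
        (1 * Real.cosh y + y * Real.sinh y) y :=
      (hasDerivAt_id y).mul (Real.hasDerivAt_cosh y)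
    have := h1.sub (Real.hasDerivAt_sinh y)
    convert this using 1 <;> first | rfl | ring
  have hmono : StrictMonoOn q (Set.Ici (0:ℝ)) := by
    apply strictMonoOn_of_deriv_pos (convex_Ici 0)
    · exact fun y _ => ((hd y).continuousAt).continuousWithinAt
    · intro y hy
      rw [interior_Ici, Set.mem_Ioi] at hy
      rw [(hd y).deriv]
      exact mul_pos hy (Real.sinh_pos_iff.mpr hy)
  have h0 : q 0 < q x := hmono (Set.self_mem_Ici) (Set.mem_Ici.mpr hx.le) hx
  simp only [hq, Real.cosh_zero, Real.sinh_zero] at h0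
  linarith

lemma muFn_neg_of_pos {τ : ℝ} (hτ : 0 < τ) : muFn τ < 0 := by
  have hs : 0 < Real.sinh τ := Real.sinh_pos_iff.mpr hτ
  have hc : 1 ≤ Real.cosh τ := Real.one_le_cosh τ
  have hts : τ < Real.sinh τ := Real.self_lt_sinh_iff.mpr hτ
  rw [muFn_of_ne hτ.ne']
  apply div_neg_of_neg_of_pos
  · nlinarith
  · positivity

lemma muFn_gt_neg_two_mul {τ : ℝ} (hτ : 0 < τ) : -(2*τ) < muFn τ := by
  have hs : 0 < Real.sinh τ := Real.sinh_pos_iff.mpr hτ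
  have h2 : Real.sinh (2*τ) < (2*τ) * Real.cosh (2*τ) := sinh_lt_mul_cosh (by linarith)
  rw [Real.sinh_two_mul, Real.cosh_two_mul] at h2
  have h1 : Real.cosh τ ^ 2 - Real.sinh τ ^ 2 = 1 := Real.cosh_sq_sub_sinh_sq τ
  rw [muFn_of_ne hτ.ne']
  rw [neg_lt, ← neg_div]
  rw [div_lt_iff₀ (by positivity)]
  nlinarith

lemma muFn_gt_neg_one {τ : ℝ} (hτ : 0 < τ) : -1 < muFn τ := by
  have hs : 0 < Real.sinh τ := Real.sinh_pos_iff.mpr hτ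
  -- sinh τ * (cosh τ - sinh τ) = sinh τ * exp (-τ) = (1 - exp (-2τ))/2 < τ
  have he : Real.cosh τ - Real.sinh τ = Real.exp (-τ) := Real.cosh_sub_sinh τ
  have hexp : -(2*τ) + 1 < Real.exp (-(2*τ)) := Real.add_one_lt_exp (by linarith)
  have hse : Real.sinh τ * Real.exp (-τ) = (1 - Real.exp (-(2*τ))) / 2 := by
    rw [Real.sinh_eq]
    have : Real.exp (-τ) * Real.exp (-τ) = Real.exp (-(2*τ)) := by
      rw [← Real.exp_add]; ring_nf
    have hpos : Real.exp τ * Real.exp (-τ) = 1 := by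
      rw [← Real.exp_add]; simp
    nlinarith
  have key : Real.sinh τ * Real.cosh τ - Real.sinh τ ^ 2 < τ := by
    have : Real.sinh τ * Real.cosh τ - Real.sinh τ ^ 2
        = Real.sinh τ * (Real.cosh τ - Real.sinh τ) := by ring
    rw [this, he, hse]
    linarith
  rw [muFn_of_ne hτ.ne']
  rw [neg_lt, ← neg_div, div_lt_iff₀ (by positivity)]
  nlinarith

lemma muFn_abs_lt_one (τ : ℝ) : |muFn τ| < 1 := by
  rcases lt_trichotomy τ 0 with h | rfl | h
  · have h' : 0 < -τ := by linarith
    have := muFn_neg_of_pos h'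
    have := muFn_gt_neg_one h'
    rw [muFn_neg] at *
    rw [abs_lt]; constructor <;> linarith
  · simp [muFn_zero]
  · have := muFn_neg_of_pos h
    have := muFn_gt_neg_one h
    rw [abs_lt]; constructor <;> linarith

lemma hasDerivAt_muFn {τ : ℝ} (hτ : τ ≠ 0) :
    HasDerivAt muFn
      (((1 - (Real.cosh τ * Real.cosh τ + Real.sinh τ * Real.sinh τ)) * Real.sinh τ ^ 2
        - (τ - Real.sinh τ * Real.cosh τ) * (2 * Real.sinh τ * Real.cosh τ))
        / (Real.sinh τ ^ 2) ^ 2) τ := by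
  have hs : Real.sinh τ ≠ 0 := fun hc => hτ (Real.sinh_eq_zero.mp hc)
  have hnum : HasDerivAt (fun x => x - Real.sinh x * Real.cosh x)
      (1 - (Real.cosh τ * Real.cosh τ + Real.sinh τ * Real.sinh τ)) τ :=
    (hasDerivAt_id τ).sub ((Real.hasDerivAt_sinh τ).mul (Real.hasDerivAt_cosh τ))
  have hden : HasDerivAt (fun x => Real.sinh x ^ 2)
      (2 * Real.sinh τ * Real.cosh τ) τ := by
    have := (Real.hasDerivAt_sinh τ).pow 2
    convert this using 1 <;> first | rfl | ring
  have hg := hnum.div hden (pow_ne_zero 2 hs)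
  apply hg.congr_of_eventuallyEq
  have hopen : {x : ℝ | x ≠ 0} ∈ nhds τ :=
    IsOpen.mem_nhds (isOpen_compl_singleton) hτ
  filter_upwards [hopen] with x hx
  exact muFn_of_ne hx

lemma muFn_strictAntiOn : StrictAntiOn muFn (Set.Ioi (0:ℝ)) := by
  apply strictAntiOn_of_deriv_neg (convex_Ioi 0)
  · exact fun x hx => ((hasDerivAt_muFn (ne_of_gt hx)).continuousAt).continuousWithinAt
  · intro x hx
    rw [interior_Ioi] at hx
    rw [(hasDerivAt_muFn (ne_of_gt hx)).deriv]
    have hs : 0 < Real.sinh x := Real.sinh_pos_iff.mpr hx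
    have hts : Real.sinh x < x * Real.cosh x := sinh_lt_mul_cosh hx
    have h1 : Real.cosh x ^ 2 - Real.sinh x ^ 2 = 1 := Real.cosh_sq_sub_sinh_sq x
    apply div_neg_of_neg_of_pos
    · nlinarith
    · positivity

lemma muFn_strictAnti : StrictAnti muFn := by
  intro x y hxy
  rcases lt_trichotomy x 0 with hx | rfl | hx
  · rcases lt_trichotomy y 0 with hy | rfl | hy
    · have : muFn (-x) < muFn (-y) :=
        muFn_strictAntiOn (Set.mem_Ioi.mpr (by linarith)) (Set.mem_Ioi.mpr (by linarith))
          (by linarith)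
      rw [muFn_neg, muFn_neg] at this
      linarith
    · have : muFn (-x) < 0 := muFn_neg_of_pos (by linarith)
      rw [muFn_neg] at this
      rw [muFn_zero]; linarith
    · have h1 : muFn (-x) < 0 := muFn_neg_of_pos (by linarith)
      rw [muFn_neg] at h1
      have h2 : muFn y < 0 := muFn_neg_of_pos hy
      linarith
  · rw [muFn_zero]
    exact muFn_neg_of_pos hxy
  · exact muFn_strictAntiOn (Set.mem_Ioi.mpr hx) (Set.mem_Ioi.mpr (by linarith)) hxy

lemma continuous_muFn : Continuous muFn := by
  rw [continuous_iff_continuousAt]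
  intro x
  rcases eq_or_ne x 0 with rfl | hx
  · have habs : ∀ τ : ℝ, |muFn τ| ≤ 2 * |τ| := by
      intro τ
      rcases lt_trichotomy τ 0 with h | rfl | h
      · have h' : 0 < -τ := by linarith
        have h1 := muFn_neg_of_pos h'
        have h2 := muFn_gt_neg_two_mul h'
        rw [muFn_neg] at h1 h2
        rw [abs_of_neg h, abs_le]
        constructor <;> linarith
      · simp [muFn_zero]
      · have h1 := muFn_neg_of_pos h
        have h2 := muFn_gt_neg_two_mul h
        rw [abs_of_pos h, abs_le]
        constructor <;> linarith
    have : Filter.Tendsto muFn (nhds 0) (nhds 0) := by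
      apply squeeze_zero_norm (fun τ => habs τ)
      have : Filter.Tendsto (fun τ : ℝ => 2 * |τ|) (nhds 0) (nhds (2 * |(0:ℝ)|)) := by
        exact (continuous_const.mul (continuous_abs)).tendsto 0
      simpa using this
    rw [ContinuousAt, muFn_zero]
    exact this
  · exact (hasDerivAt_muFn hx).continuousAt

lemma tendsto_muFn_atTop : Tendsto muFn atTop (nhds (-1)) := by
  have hsinh_top : Tendsto Real.sinh atTop atTop := by
    apply tendsto_atTop_mono' atTop ?_ tendsto_id
    filter_upwards [eventually_gt_atTop (0:ℝ)] with x hx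
    exact (Real.self_lt_sinh_iff.mpr hx).le
  have hA : Tendsto (fun τ : ℝ => τ / Real.sinh τ ^ 2) atTop (nhds 0) := by
    apply tendsto_of_tendsto_of_tendsto_of_le_of_le' tendsto_const_nhds
      hsinh_top.inv_tendsto_atTop
    · filter_upwards [eventually_gt_atTop (0:ℝ)] with τ hτ
      positivity
    · filter_upwards [eventually_gt_atTop (0:ℝ)] with τ hτ
      have hs : 0 < Real.sinh τ := Real.sinh_pos_iff.mpr hτ
      have hts : τ < Real.sinh τ := Real.self_lt_sinh_iff.mpr hτ
      rw [Pi.inv_apply, ← one_div, div_le_div_iff₀ (by positivity) hs]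
      nlinarith
  have h2t : Tendsto (fun τ : ℝ => 2*τ) atTop atTop :=
    Tendsto.const_mul_atTop two_pos tendsto_id
  have hexp : Tendsto (fun τ : ℝ => Real.exp (-(2*τ))) atTop (nhds 0) :=
    Real.tendsto_exp_atBot.comp (tendsto_neg_atTop_atBot.comp h2t)
  have hB : Tendsto (fun τ : ℝ => Real.cosh τ / Real.sinh τ) atTop (nhds 1) := by
    have heq : ∀ᶠ τ : ℝ in atTop, (1 + Real.exp (-(2*τ))) / (1 - Real.exp (-(2*τ)))
        = Real.cosh τ / Real.sinh τ := by
      filter_upwards [eventually_gt_atTop (0:ℝ)] with τ hτ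
      have hs : Real.sinh τ ≠ 0 := (Real.sinh_pos_iff.mpr hτ).ne'
      have hd : 1 - Real.exp (-(2*τ)) ≠ 0 := by
        have : Real.exp (-(2*τ)) < 1 := Real.exp_lt_one_iff.mpr (by linarith)
        linarith
      have h1 : Real.exp (-τ) * Real.exp (-τ) = Real.exp (-(2*τ)) := by
        rw [← Real.exp_add]; ring_nf
      have h2 : Real.exp τ * Real.exp (-τ) = 1 := by
        rw [← Real.exp_add]; simp
      have hs' : Real.exp τ - Real.exp (-τ) ≠ 0 := by
        rw [Real.sinh_eq] at hs
        intro hc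
        exact hs (by rw [hc]; norm_num)
      have hd' : 1 - Real.exp (-τ) * Real.exp (-τ) ≠ 0 := by rw [h1]; exact hd
      rw [Real.cosh_eq, Real.sinh_eq, ← h1]
      have hd'' : 1 - Real.exp (-τ) ^ 2 ≠ 0 := by rw [sq]; exact hd'
      field_simp
      linear_combination 2 * Real.exp (-τ) * h2
    have hlim : Tendsto (fun τ : ℝ => (1 + Real.exp (-(2*τ))) / (1 - Real.exp (-(2*τ))))
        atTop (nhds 1) := by
      have hnum : Tendsto (fun τ : ℝ => 1 + Real.exp (-(2*τ))) atTop (nhds (1 + 0)) :=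
        tendsto_const_nhds.add hexp
      have hden : Tendsto (fun τ : ℝ => 1 - Real.exp (-(2*τ))) atTop (nhds (1 - 0)) :=
        tendsto_const_nhds.sub hexp
      have := hnum.div hden (by norm_num)
      rw [add_zero, sub_zero, div_one] at this
      exact this
    exact Tendsto.congr' heq hlim
  have heq : ∀ᶠ τ : ℝ in atTop,
      (fun τ : ℝ => τ / Real.sinh τ ^ 2 - Real.cosh τ / Real.sinh τ) τ = muFn τ := by
    filter_upwards [eventually_gt_atTop (0:ℝ)] with τ hτ
    simp [muFn, hτ.ne']
  have := hA.sub hB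
  rw [zero_sub] at this
  exact Tendsto.congr' heq this

lemma tendsto_muFn_atBot : Tendsto muFn atBot (nhds 1) := by
  have h1 : Tendsto (fun τ : ℝ => -muFn (-τ)) atBot (nhds 1) := by
    have hneg : Tendsto (fun τ : ℝ => -τ) atBot atTop := tendsto_neg_atBot_atTop
    have := (tendsto_muFn_atTop.comp hneg).neg
    simpa using this
  apply h1.congr
  intro τ
  rw [muFn_neg]; ring

theorem muFn_strictAnti_limits_unique_solution :
    StrictAnti muFn ∧
    Tendsto muFn atBot (nhds 1) ∧
    Tendsto muFn atTop (nhds (-1)) ∧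
    (∀ r : ℝ, -1 < r → r < 1 → ∃! τ : ℝ, muFn τ = r) ∧
    (∀ r : ℝ, 1 ≤ |r| → ¬∃ τ : ℝ, muFn τ = r) := by
  refine ⟨muFn_strictAnti, tendsto_muFn_atBot, tendsto_muFn_atTop, ?_, ?_⟩
  · intro r hr1 hr2
    obtain ⟨a, ha⟩ : ∃ a : ℝ, r < muFn a := by
      have : ∀ᶠ x in atBot, r < muFn x :=
        tendsto_muFn_atBot.eventually (eventually_gt_nhds hr2)
      exact this.exists
    obtain ⟨b, hb, hab⟩ : ∃ b : ℝ, muFn b < r ∧ a ≤ b := by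
      have h1 : ∀ᶠ x in atTop, muFn x < r :=
        tendsto_muFn_atTop.eventually (eventually_lt_nhds hr1)
      exact (h1.and (eventually_ge_atTop a)).exists
    obtain ⟨τ, _, hτ⟩ := intermediate_value_Icc' hab continuous_muFn.continuousOn
      (Set.mem_Icc.mpr ⟨hb.le, ha.le⟩)
    exact ⟨τ, hτ, fun y hy => muFn_strictAnti.injective (hy.trans hτ.symm)⟩
  · rintro r hr ⟨τ, hτ⟩
    have := muFn_abs_lt_one τ
    rw [hτ] at this
    linarith
end

section
/- Let θ₁, θ₂, θ₃ ∈ ℝ not all zero and set a = √(θ₁²+θ₂²+θ₃²). The 4×4 real matrix A = [[0,-θ₁,θ₃,θ₂],[-θ₁,0,-θ₂,θ₃],[θ₃,θ₂,0,θ₁],[θ₂,-θ₃,-θ₁,0]] has characteristic polynomial λ⁴ - a⁴ (equivalently (λ² - a²)(λ² + a²)), so its eigenvalues over ℂ are a, -a, ia, -ia. -/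
open Matrix Polynomial

theorem mem_spectrum_iff_eval_charpoly {K : Type*} [Field K] {n : Type*} [Fintype n]
    [DecidableEq n] (M : Matrix n n K) (z : K) :
    z ∈ spectrum K M ↔ M.charpoly.eval z = 0 := by
  have h : (M.charmatrix).map (Polynomial.evalRingHom z) = algebraMap K (Matrix n n K) z - M := by
    ext i j
    by_cases hij : i = j <;>
      simp [Matrix.charmatrix_apply, hij, Matrix.algebraMap_matrix_apply, Matrix.one_apply]
  rw [spectrum.mem_iff, Matrix.isUnit_iff_isUnit_det, isUnit_iff_ne_zero, not_not,
    Matrix.charpoly, ← Polynomial.coe_evalRingHom, RingHom.map_det, RingHom.mapMatrix_apply, h]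

set_option maxHeartbeats 1000000 in
theorem reduced_geodesic_matrix_eigenvalues (θ₁ θ₂ θ₃ : ℝ)
    (hθ : ¬(θ₁ = 0 ∧ θ₂ = 0 ∧ θ₃ = 0)) :
    let a : ℝ := Real.sqrt (θ₁^2 + θ₂^2 + θ₃^2)
    let A : Matrix (Fin 4) (Fin 4) ℝ :=
      !![0, -θ₁, θ₃, θ₂; -θ₁, 0, -θ₂, θ₃; θ₃, θ₂, 0, θ₁; θ₂, -θ₃, -θ₁, 0]
    A.charpoly = X^4 - C (a^4) ∧
    spectrum ℂ (A.map (Complex.ofReal ·)) =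
      {(a : ℂ), -(a : ℂ), Complex.I * a, -(Complex.I * a)} := by
  intro a A
  have hnn : (0:ℝ) ≤ θ₁^2 + θ₂^2 + θ₃^2 := by positivity
  have ha2 : a^2 = θ₁^2 + θ₂^2 + θ₃^2 := Real.sq_sqrt hnn
  have ha4 : a^4 = (θ₁^2 + θ₂^2 + θ₃^2)^2 := by rw [show a^4 = (a^2)^2 by ring, ha2]
  have hcp : A.charpoly = X^4 - C (a^4) := by
    rw [ha4]
    show (Matrix.charmatrix A).det = _
    simp only [Matrix.det_succ_row_zero, Fin.sum_univ_succ, Matrix.charmatrix_apply, A,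
      Matrix.one_apply, Fin.ext_iff, Matrix.submatrix_apply]
    norm_num [Fin.succAbove, Fin.lt_def, Fin.ext_iff,
      show ((2:Fin 3).castSucc : Fin 4) = 2 from rfl,
      show ((1:Fin 3).castSucc : Fin 4) = 1 from rfl,
      show ((0:Fin 3).castSucc : Fin 4) = 0 from rfl, Matrix.diagonal_apply]
    simp [Matrix.vecHead, Matrix.vecTail, Matrix.cons_val]
    ring_nf
  refine ⟨hcp, ?_⟩
  have hcpC : (A.map (Complex.ofReal ·)).charpoly = X^4 - C ((a:ℂ)^4) := by
    rw [show (Complex.ofReal ·) = ⇑(Complex.ofRealHom) from rfl, Matrix.charpoly_map, hcp]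
    simp [Polynomial.map_sub, Polynomial.map_pow]
  ext z
  rw [mem_spectrum_iff_eval_charpoly, hcpC]
  have key : z^4 - (a:ℂ)^4 = (z - a) * (z + a) * (z - Complex.I * a) * (z + Complex.I * a) := by
    linear_combination (z^2 - (a:ℂ)^2) * (a:ℂ)^2 * Complex.I_sq
  simp only [eval_sub, eval_pow, eval_X, eval_C, key, mul_eq_zero, Set.mem_insert_iff,
    Set.mem_singleton_iff, sub_eq_zero, add_eq_zero_iff_eq_neg]
  tauto
end
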